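/- arXiv:math/0408036 — 5 statements merged into one kernel-verified Lean document; each statement's English description precedes it below -/
import Mathlib

section
/- A 2x2 complex matrix X is Hermitian with det(X) = -1 if and only if there exists F in SL(2,C) such that X = F e_3 F^*, where e_3 = diag(1,-1) and F^* is the conjugate transpose of F. -/
open Matrix

/-- A 2x2 complex matrix X is Hermitian with det X = -1 iff X = F e₃ F* for some
F ∈ SL(2,ℂ), where e₃ = diag(1,-1). -/
theorem hermitian_det_neg_one_iff_exists_sl2
    (X : Matrix (Fin 2) (Fin 2) ℂ) :
    (X.IsHermitian ∧ X.det = -1) ↔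
      ∃ F : Matrix (Fin 2) (Fin 2) ℂ, F.det = 1 ∧
        X = F * !![(1 : ℂ), 0; 0, -1] * Fᴴ := by
  constructor
  · rintro ⟨hH, hd⟩
    obtain ⟨a, ha'⟩ : ∃ a, X 0 0 = a := ⟨_, rfl⟩
    obtain ⟨b, hb'⟩ : ∃ b, X 0 1 = b := ⟨_, rfl⟩
    obtain ⟨d, hd'⟩ : ∃ d, X 1 1 = d := ⟨_, rfl⟩
    have h10 : X 1 0 = (starRingEnd ℂ) b := by
      have := congrFun (congrFun hH.symm 1) 0
      simpa [conjTranspose_apply, hb'] using this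
    have haa : (starRingEnd ℂ) a = a := by
      have := congrFun (congrFun hH 0) 0
      simpa [conjTranspose_apply, ha'] using this
    have hdd : (starRingEnd ℂ) d = d := by
      have := congrFun (congrFun hH 1) 1
      simpa [conjTranspose_apply, hd'] using this
    have har : (a.re : ℂ) = a := Complex.conj_eq_iff_re.mp haa
    have hdr : (d.re : ℂ) = d := Complex.conj_eq_iff_re.mp hdd
    have hdet : a * d - b * (starRingEnd ℂ) b = -1 := by
      rw [det_fin_two, ha', hb', hd', h10] at hd; exact hd
    rcases lt_trichotomy a.re 0 with hneg | hzero | hpos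
    · -- a.re < 0
      set s : ℝ := Real.sqrt (-a.re) with hs'
      have hs0 : s ≠ 0 := ne_of_gt (Real.sqrt_pos.mpr (by linarith))
      have hs0' : (s : ℂ) ≠ 0 := by exact_mod_cast hs0
      have hss : s * s = -a.re := Real.mul_self_sqrt (by linarith)
      have hs2 : (s : ℂ) * s = -a := by
        rw [← Complex.ofReal_mul, hss]; push_cast; rw [har]
      refine ⟨!![0, (s : ℂ); -1 / s, -(starRingEnd ℂ) b / s], ?_, ?_⟩
      · rw [det_fin_two_of]; field_simp; ring
      · ext i j
        fin_cases i <;> fin_cases j <;>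
          simp [mul_apply, Fin.sum_univ_succ, Complex.conj_ofReal, map_div₀,
            ha', hb', hd', h10]
        · linear_combination hs2
        · field_simp
        · field_simp
        · field_simp
          linear_combination d * hs2 - hdet
    · -- a.re = 0
      have ha0 : a = 0 := by rw [← har, hzero]; simp
      have hb1 : b * (starRingEnd ℂ) b = 1 := by
        rw [ha0] at hdet; linear_combination -hdet
      refine ⟨!![-b, 1; -(1 + d) / 2, -(starRingEnd ℂ) b * (1 - d) / 2], ?_, ?_⟩
      · rw [det_fin_two_of]
        linear_combination ((1 - d) / 2) * hb1
      · ext i j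
        fin_cases i <;> fin_cases j <;>
          simp [mul_apply, Fin.sum_univ_succ, Complex.conj_ofReal, map_div₀,
            ha', hb', hd', h10, hdd, ha0, map_ofNat]
        · linear_combination -hb1
        · ring
        · ring
        · linear_combination ((1 - d) ^ 2 / 4) * hb1
    · -- a.re > 0
      set s : ℝ := Real.sqrt a.re with hs'
      have hs0 : s ≠ 0 := ne_of_gt (Real.sqrt_pos.mpr hpos)
      have hs0' : (s : ℂ) ≠ 0 := by exact_mod_cast hs0
      have hss : s * s = a.re := Real.mul_self_sqrt hpos.le
      have hs2 : (s : ℂ) * s = a := by rw [← Complex.ofReal_mul, hss, har]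
      refine ⟨!![(s : ℂ), 0; (starRingEnd ℂ) b / s, 1 / s], ?_, ?_⟩
      · rw [det_fin_two_of]; field_simp; ring
      · ext i j
        fin_cases i <;> fin_cases j <;>
          simp [mul_apply, Fin.sum_univ_succ, Complex.conj_ofReal, map_div₀,
            ha', hb', hd', h10]
        · exact hs2.symm
        · field_simp
        · field_simp
        · field_simp
          linear_combination d * hs2 + hdet
  · rintro ⟨F, hF, rfl⟩
    constructor
    · have h : (!![(1 : ℂ), 0; 0, -1])ᴴ = !![(1 : ℂ), 0; 0, -1] := by
        ext i j; fin_cases i <;> fin_cases j <;> simp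
      unfold Matrix.IsHermitian
      rw [conjTranspose_mul, conjTranspose_mul, conjTranspose_conjTranspose, h,
        Matrix.mul_assoc]
    · rw [det_mul, det_mul, det_conjTranspose, hF]
      simp [det_fin_two_of]
end

section
/- Let a_1, a_2, a_3 be complex numbers with a_1^2 + a_2*a_3 = 0. Then the negative determinant of the matrix [[a_1 + conj(a_1), -a_2 + conj(a_3)],[a_3 - conj(a_2), a_1 + conj(a_1)]] equals (|a_2| - |a_3|)^2; in particular it is nonnegative, and it is zero if and only if |a_2| = |a_3|. -/
open ComplexConjugate

/-- For a null curve (a₁² + a₂a₃ = 0), the induced de Sitter metric density is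
-det[...] = (|a₂| - |a₃|)², nonnegative, vanishing iff |a₂| = |a₃|. -/
theorem neg_det_eq_abs_sub_sq (a1 a2 a3 : ℂ) (h : a1^2 + a2 * a3 = 0) :
    -Matrix.det !![a1 + conj a1, -a2 + conj a3;
                   a3 - conj a2, a1 + conj a1]
      = (((‖a2‖ - ‖a3‖)^2 : ℝ) : ℂ) ∧
    (0 : ℝ) ≤ (‖a2‖ - ‖a3‖)^2 ∧
    (-Matrix.det !![a1 + conj a1, -a2 + conj a3;
                    a3 - conj a2, a1 + conj a1] = 0 ↔
      ‖a2‖ = ‖a3‖) := by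
  have h23 : a2 * a3 = -a1^2 := by linear_combination h
  have hc : conj a2 * conj a3 = -(conj a1)^2 := by
    have := congrArg conj h23
    simpa [map_mul, map_neg, map_pow] using this
  have ha1 : a1 * conj a1 = ((‖a2‖ * ‖a3‖ : ℝ) : ℂ) := by
    rw [Complex.mul_conj, Complex.normSq_eq_norm_sq]
    norm_cast
    have := congrArg (fun z : ℂ => ‖z‖) h23
    simpa [map_mul, pow_two, map_neg, map_pow] using this.symm
  have ha2 : a2 * conj a2 = (((‖a2‖)^2 : ℝ) : ℂ) := by
    rw [Complex.mul_conj, Complex.normSq_eq_norm_sq]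
  have ha3 : a3 * conj a3 = (((‖a3‖)^2 : ℝ) : ℂ) := by
    rw [Complex.mul_conj, Complex.normSq_eq_norm_sq]
  have main : -Matrix.det !![a1 + conj a1, -a2 + conj a3;
                   a3 - conj a2, a1 + conj a1]
      = (((‖a2‖ - ‖a3‖)^2 : ℝ) : ℂ) := by
    rw [Matrix.det_fin_two_of]
    push_cast [Complex.ofReal_pow, Complex.ofReal_mul] at ha1 ha2 ha3 ⊢
    linear_combination -h23 - hc + ha2 + ha3 - 2*ha1
  refine ⟨main, sq_nonneg _, ?_⟩
  rw [main]
  norm_cast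
  constructor
  · intro h0
    have : ‖a2‖ - ‖a3‖ = 0 := by
      exact pow_eq_zero_iff (n := 2) (by norm_num) |>.mp h0
    linarith
  · intro h0; rw [h0]; ring
end

section
/- Let g and w be complex numbers. Then the negative determinant of the matrix M + M^*, where M = w*[[g,-g^2],[1,-g]]*e_3 and e_3 = diag(1,-1), equals (1-|g|^2)^2 |w|^2. In particular, this vanishes if and only if |g| = 1 or w = 0. -/
open Matrix

/-- With M = w·[[g,-g²],[1,-g]]·e₃, one has -det(M + Mᴴ) = (1-|g|²)²|w|²,
which vanishes iff |g| = 1 or w = 0. -/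
theorem neg_det_first_fundamental_form (g w : ℂ) :
    -Matrix.det
        (w • (!![g, -g^2; 1, -g] * !![(1 : ℂ), 0; 0, -1]) +
          (w • (!![g, -g^2; 1, -g] * !![(1 : ℂ), 0; 0, -1]))ᴴ)
      = (((1 - ‖g‖^2)^2 * ‖w‖^2 : ℝ) : ℂ) ∧
    ((1 - ‖g‖^2)^2 * ‖w‖^2 = 0 ↔
      ‖g‖ = 1 ∨ w = 0) := by
  constructor
  · have hg : (‖g‖ : ℂ)^2 = g * starRingEnd ℂ g := by
      rw [Complex.mul_conj]; norm_cast; exact Complex.sq_norm g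
    have hw : (‖w‖ : ℂ)^2 = w * starRingEnd ℂ w := by
      rw [Complex.mul_conj]; norm_cast; exact Complex.sq_norm w
    simp [Matrix.det_fin_two, Matrix.mul_apply, Fin.sum_univ_two, conjTranspose_apply]
    push_cast [hg, hw]
    ring_nf
  · constructor
    · intro h
      rcases mul_eq_zero.1 h with h | h
      · left
        have : ‖g‖ ^ 2 = 1 := by nlinarith [pow_eq_zero_iff (n := 2) (two_ne_zero) |>.1 h]
        nlinarith [norm_nonneg g]
      · right
        have := pow_eq_zero_iff (n := 2) (two_ne_zero) |>.1 h
        exact norm_eq_zero.1 this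
    · rintro (h | h) <;> simp [h]
end

section
/- Define F : C -> M_2(C) by F(z) = [[z+1, -z],[z, -z+1]]. Then for every z, det(F(z)) = 1 (so F takes values in SL(2,C)), the derivative F'(z) = [[1,-1],[1,-1]] has determinant 0 (so F is a holomorphic null immersion), and the map f(z) = F(z) e_3 F(z)^* satisfies det[d f] = 0 identically, i.e. writing f(x+iy) as a function of the real coordinates (x,y), the symmetric 2-tensor -det(f_x dx + f_y dy) vanishes identically on C. -/
open Matrix

/-- F(z) = [[z+1,-z],[z,-z+1]]. -/
noncomputable def Fnull (z : ℂ) : Matrix (Fin 2) (Fin 2) ℂ :=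
  !![z + 1, -z; z, -z + 1]

/-- f(x,y) = F(x+iy) e₃ F(x+iy)*. -/
noncomputable def fnull (x y : ℝ) : Matrix (Fin 2) (Fin 2) ℂ :=
  Fnull (x + y * Complex.I) * !![(1 : ℂ), 0; 0, -1] * (Fnull (x + y * Complex.I))ᴴ

lemma fnull_apply (x y : ℝ) :
    fnull x y = !![2*(x:ℂ)+1, 2*(x:ℂ); 2*(x:ℂ), 2*(x:ℂ)-1] := by
  unfold fnull Fnull
  ext i j
  fin_cases i <;> fin_cases j <;>
    simp [Matrix.mul_apply, Fin.sum_univ_two, Matrix.conjTranspose_apply,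
      Complex.conj_ofReal, Complex.conj_I, map_add, _root_.map_mul, map_neg, _root_.map_one] <;>
    ring

lemma hasDerivAt_ofReal (x : ℝ) : HasDerivAt (fun t : ℝ => (t : ℂ)) 1 x := by
  exact Complex.ofRealCLM.hasDerivAt (x := x)

lemma deriv_two_mul_ofReal (x : ℝ) : deriv (fun t : ℝ => 2*(t:ℂ)) x = 2 := by
  simpa using (((hasDerivAt_ofReal x).const_mul (2:ℂ))).deriv

/-- A degenerate example: F(z) = [[z+1,-z],[z,-z+1]] is a holomorphic null
immersion into SL(2,ℂ) (det F = 1, F' = [[1,-1],[1,-1]] has det 0 and is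
nonzero), but the induced metric -det(f_x dx + f_y dy) of f = F e₃ F*
vanishes identically. -/
theorem degenerate_null_immersion_example :
    (∀ z : ℂ, Matrix.det (Fnull z) = 1) ∧
    (∀ z : ℂ, ∀ i j : Fin 2,
      deriv (fun w : ℂ => Fnull w i j) z = !![(1 : ℂ), -1; 1, -1] i j) ∧
    Matrix.det !![(1 : ℂ), -1; 1, -1] = 0 ∧
    !![(1 : ℂ), -1; 1, -1] ≠ 0 ∧
    (∀ x y a b : ℝ,
      -Matrix.det (Matrix.of fun i j : Fin 2 =>
          a * deriv (fun t : ℝ => fnull t y i j) x +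
          b * deriv (fun s : ℝ => fnull x s i j) y) = 0) := by
  refine ⟨?_, ?_, ?_, ?_, ?_⟩
  · intro z
    simp [Fnull, Matrix.det_fin_two]
    ring
  · intro z i j
    fin_cases i <;> fin_cases j <;> simp [Fnull]
  · simp [Matrix.det_fin_two]
  · intro h
    have := congrFun (congrFun h 0) 0
    simp at this
  · intro x y a b
    have hx : ∀ i j : Fin 2, deriv (fun t : ℝ => fnull t y i j) x = 2 := by
      intro i j
      simp only [fnull_apply]
      fin_cases i <;> fin_cases j <;> simp
      all_goals first
        | exact (hasDerivAt_ofReal x).deriv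
        | simpa using (((hasDerivAt_ofReal x).const_mul (2:ℂ)).sub_const 1).deriv
    have hy : ∀ i j : Fin 2, deriv (fun s : ℝ => fnull x s i j) y = 0 := by
      intro i j
      simp only [fnull_apply]
      fin_cases i <;> fin_cases j <;> simp
    rw [Matrix.det_fin_two]
    simp [hx, hy]
end

section
/- Let x = (x_0, x_1, x_2, x_3) satisfy -x_0^2 + x_1^2 + x_2^2 + x_3^2 = 1 and x_0 > 1, and define p(x) = (1/(1+x_0)) * (x_1, x_2, x_3) in R^3. Then |p(x)|^2 = (1 + x_0^2)/(1 + x_0)^2, and 1/2 < |p(x)|^2 < 1. Moreover, p is a bijection from { x in S^3_1 : x_0 > 1 } onto the spherical shell { y in R^3 : 1/sqrt(2) < |y| < 1 }. -/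
open Real

/-- The projection p(x) = (1/(1+x₀))·(x₁,x₂,x₃). -/
noncomputable def deSitterProj (x : ℝ × ℝ × ℝ × ℝ) : ℝ × ℝ × ℝ :=
  (x.2.1 / (1 + x.1), x.2.2.1 / (1 + x.1), x.2.2.2 / (1 + x.1))

lemma deSitter_key (x : ℝ × ℝ × ℝ × ℝ)
    (hc : -x.1^2 + x.2.1^2 + x.2.2.1^2 + x.2.2.2^2 = 1) (h1 : x.1 > 1) :
    (deSitterProj x).1^2 + (deSitterProj x).2.1^2 + (deSitterProj x).2.2^2
      = (1 + x.1^2) / (1 + x.1)^2 := by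
  have hne : (1 + x.1) ≠ 0 := by nlinarith
  have hsum : x.2.1^2 + x.2.2.1^2 + x.2.2.2^2 = 1 + x.1^2 := by linarith
  simp only [deSitterProj, div_pow]
  rw [← add_div, ← add_div, hsum]

lemma half_lt (t : ℝ) (h1 : t > 1) : 1 / 2 < (1 + t^2) / (1 + t)^2 := by
  rw [div_lt_div_iff₀ (by norm_num) (by positivity)]
  nlinarith [sq_nonneg (t - 1)]

lemma lt_one (t : ℝ) (h1 : t > 1) : (1 + t^2) / (1 + t)^2 < 1 := by
  rw [div_lt_one (by positivity)]
  nlinarith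

/-- For x ∈ S³₁ with x₀ > 1, |p(x)|² = (1+x₀²)/(1+x₀)² lies in (1/2, 1), and p is
a bijection from {x ∈ S³₁ : x₀ > 1} onto the shell {y : 1/√2 < |y| < 1}. -/
theorem deSitter_projection :
    (∀ x : ℝ × ℝ × ℝ × ℝ,
      -x.1^2 + x.2.1^2 + x.2.2.1^2 + x.2.2.2^2 = 1 → x.1 > 1 →
      ((deSitterProj x).1^2 + (deSitterProj x).2.1^2 + (deSitterProj x).2.2^2
          = (1 + x.1^2) / (1 + x.1)^2 ∧
        1 / 2 < (deSitterProj x).1^2 + (deSitterProj x).2.1^2 + (deSitterProj x).2.2^2 ∧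
        (deSitterProj x).1^2 + (deSitterProj x).2.1^2 + (deSitterProj x).2.2^2 < 1)) ∧
    Set.BijOn deSitterProj
      {x : ℝ × ℝ × ℝ × ℝ | -x.1^2 + x.2.1^2 + x.2.2.1^2 + x.2.2.2^2 = 1 ∧ x.1 > 1}
      {y : ℝ × ℝ × ℝ |
        1 / Real.sqrt 2 < Real.sqrt (y.1^2 + y.2.1^2 + y.2.2^2) ∧
        Real.sqrt (y.1^2 + y.2.1^2 + y.2.2^2) < 1} := by
  constructor
  · intro x hc h1
    exact ⟨deSitter_key x hc h1,
      (deSitter_key x hc h1) ▸ half_lt x.1 h1,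
      (deSitter_key x hc h1) ▸ lt_one x.1 h1⟩
  · refine ⟨?_, ?_, ?_⟩
    · -- MapsTo
      rintro x ⟨hc, h1⟩
      have hk := deSitter_key x hc h1
      have hhalf := hk ▸ half_lt x.1 h1
      have hone := hk ▸ lt_one x.1 h1
      have hnn : (0:ℝ) ≤ (deSitterProj x).1^2 + (deSitterProj x).2.1^2 + (deSitterProj x).2.2^2 := by positivity
      constructor
      · have : (1:ℝ) / Real.sqrt 2 = Real.sqrt (1/2) := by
          rw [Real.sqrt_div' 1 (by norm_num)]
          simp
        rw [this]
        exact Real.sqrt_lt_sqrt (by norm_num) hhalf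
      · calc Real.sqrt ((deSitterProj x).1^2 + (deSitterProj x).2.1^2 + (deSitterProj x).2.2^2)
            < Real.sqrt 1 := Real.sqrt_lt_sqrt hnn hone
          _ = 1 := Real.sqrt_one
    · -- InjOn
      rintro x ⟨hcx, h1x⟩ z ⟨hcz, h1z⟩ heq
      have hne : (1 + x.1) ≠ 0 := by nlinarith
      have hnez : (1 + z.1) ≠ 0 := by nlinarith
      simp only [deSitterProj, Prod.mk.injEq] at heq
      obtain ⟨e1, e2, e3⟩ := heq
      have hsum : (1 + x.1^2) / (1 + x.1)^2 = (1 + z.1^2) / (1 + z.1)^2 := by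
        rw [← deSitter_key x hcx h1x, ← deSitter_key z hcz h1z]
        simp only [deSitterProj]
        rw [e1, e2, e3]
      rw [div_eq_div_iff (by positivity) (by positivity)] at hsum
      have h0 : (z.1 - x.1) * (1 - x.1 * z.1) = 0 := by linear_combination hsum / 2
      have hxz : x.1 = z.1 := by
        rcases mul_eq_zero.mp h0 with h | h
        · linarith
        · nlinarith
      have e1' : x.2.1 = z.2.1 := by
        rw [hxz] at e1; exact (div_left_inj' hnez).mp e1
      have e2' : x.2.2.1 = z.2.2.1 := by
        rw [hxz] at e2; exact (div_left_inj' hnez).mp e2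
      have e3' : x.2.2.2 = z.2.2.2 := by
        rw [hxz] at e3; exact (div_left_inj' hnez).mp e3
      exact Prod.ext hxz (Prod.ext e1' (Prod.ext e2' e3'))
    · -- SurjOn
      rintro y ⟨hy1, hy2⟩
      obtain ⟨q, hqdef⟩ : ∃ q : ℝ, y.1^2 + y.2.1^2 + y.2.2^2 = q := ⟨_, rfl⟩
      rw [hqdef] at hy1 hy2
      have hqnn : 0 ≤ q := by rw [← hqdef]; positivity
      have hq1 : 1/2 < q := by
        have h := pow_lt_pow_left₀ hy1 (by positivity) (by norm_num : 2 ≠ 0)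
        rw [div_pow, one_pow, Real.sq_sqrt (by norm_num : (0:ℝ) ≤ 2),
          Real.sq_sqrt hqnn] at h
        linarith
      have hq2 : q < 1 := by
        have h := pow_lt_pow_left₀ hy2 (Real.sqrt_nonneg _) (by norm_num : 2 ≠ 0)
        rw [Real.sq_sqrt hqnn, one_pow] at h
        exact h
      obtain ⟨s, hsdef⟩ : ∃ s : ℝ, s = Real.sqrt (2*q - 1) := ⟨_, rfl⟩
      have hs0 : 0 ≤ s := hsdef ▸ Real.sqrt_nonneg _
      have hs2 : s^2 = 2*q - 1 := by rw [hsdef]; exact Real.sq_sqrt (by linarith)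
      have h1q : (0:ℝ) < 1 - q := by linarith
      obtain ⟨a, hadef⟩ : ∃ a : ℝ, a = (q + s) / (1 - q) := ⟨_, rfl⟩
      have ha1 : 1 < a := by
        rw [hadef, lt_div_iff₀ h1q]
        linarith
      have hane : (1 + a) ≠ 0 := by nlinarith
      have hpoly : (q - 1) * a^2 + 2*q*a + (q - 1) = 0 := by
        rw [hadef]
        field_simp
        linear_combination (q - 1) * hs2
      refine ⟨(a, (1+a)*y.1, (1+a)*y.2.1, (1+a)*y.2.2), ⟨?_, ha1⟩, ?_⟩
      · show -a^2 + ((1+a)*y.1)^2 + ((1+a)*y.2.1)^2 + ((1+a)*y.2.2)^2 = 1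
        linear_combination hpoly + (1+a)^2 * hqdef
      · simp only [deSitterProj]
        refine Prod.ext ?_ (Prod.ext ?_ ?_) <;> simp <;> field_simp
end
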